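/- arXiv:1403.7737 — 2 statements merged into one kernel-verified Lean document; each statement's English description precedes it below -/
import Mathlib

section
/- Let X ∈ ℝ^{n×d} (n ≥ d, rank(X) = d), y ∈ ℝ^n, β_lsr = (XᵀX)⁻¹Xᵀy, and let U ∈ ℝ^{n×d} have orthonormal columns spanning the column space of X. Let S ∈ ℝ^{c×n} be any matrix such that rank(SU) = d, and let β̃ be any minimizer of β ↦ ‖Sy − SXβ‖₂². Then the vector z = UᵀX(β_lsr − β̃) satisfies ‖z‖₂ ≤ ‖UᵀSᵀS(I_n − UUᵀ)y‖₂ / σ_min²(SU), where σ_min(SU) is the smallest singular value of SU. -/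
open Matrix BigOperators

/-- Euclidean norm of a real vector. -/
noncomputable def vnorm {m : ℕ} (v : Fin m → ℝ) : ℝ := Real.sqrt (∑ i, v i ^ 2)

/-- Smallest singular value of a real matrix: `min_{‖v‖=1} ‖Xv‖`. -/
noncomputable def sigmaMin {n d : ℕ} (X : Matrix (Fin n) (Fin d) ℝ) : ℝ :=
  sInf {r : ℝ | ∃ v : Fin d → ℝ, vnorm v = 1 ∧ r = vnorm (X.mulVec v)}

lemma vnorm_eq_norm {m : ℕ} (v : Fin m → ℝ) :
    vnorm v = ‖(WithLp.equiv 2 (Fin m → ℝ)).symm v‖ := by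
  rw [vnorm, EuclideanSpace.norm_eq]
  refine congrArg Real.sqrt ?_
  refine Finset.sum_congr rfl fun i _ => ?_
  rw [WithLp.equiv_symm_apply, WithLp.ofLp_toLp, Real.norm_eq_abs, sq_abs]

lemma vnorm_nonneg {m : ℕ} (v : Fin m → ℝ) : 0 ≤ vnorm v := Real.sqrt_nonneg _

lemma vnorm_sq {m : ℕ} (v : Fin m → ℝ) : vnorm v ^ 2 = v ⬝ᵥ v := by
  rw [vnorm, Real.sq_sqrt (by positivity)]
  simp [dotProduct, sq]

lemma vnorm_neg {m : ℕ} (v : Fin m → ℝ) : vnorm (-v) = vnorm v := by simp [vnorm]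

lemma vnorm_smul {m : ℕ} (c : ℝ) (v : Fin m → ℝ) : vnorm (c • v) = |c| * vnorm v := by
  simp only [vnorm_eq_norm]
  rw [← Real.norm_eq_abs, ← norm_smul]
  rfl

lemma vnorm_pos {m : ℕ} (v : Fin m → ℝ) (hv : v ≠ 0) : 0 < vnorm v := by
  rw [vnorm_eq_norm, norm_pos_iff]
  intro h
  apply hv
  have := congrArg (WithLp.equiv 2 (Fin m → ℝ)) h
  simpa using this

lemma dot_le_vnorm_mul {m : ℕ} (v w : Fin m → ℝ) : v ⬝ᵥ w ≤ vnorm v * vnorm w := by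
  have h := real_inner_le_norm ((WithLp.equiv 2 (Fin m → ℝ)).symm v)
    ((WithLp.equiv 2 (Fin m → ℝ)).symm w)
  rw [← vnorm_eq_norm, ← vnorm_eq_norm] at h
  refine le_trans (le_of_eq ?_) h
  rw [PiLp.inner_apply]
  simp [dotProduct, RCLike.inner_apply, mul_comm]

lemma dotProduct_self_nonneg' {m : ℕ} (v : Fin m → ℝ) : 0 ≤ v ⬝ᵥ v := by
  rw [← vnorm_sq]; positivity

lemma inj_of_rank {n d : ℕ} (A : Matrix (Fin n) (Fin d) ℝ) (h : A.rank = d) :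
    Function.Injective A.mulVecLin := by
  rw [← LinearMap.ker_eq_bot]
  have h1 := LinearMap.finrank_range_add_finrank_ker A.mulVecLin
  rw [Module.finrank_pi, Fintype.card_fin] at h1
  rw [Matrix.rank] at h
  rw [h] at h1
  have : Module.finrank ℝ (LinearMap.ker A.mulVecLin) = 0 := by omega
  exact Submodule.finrank_eq_zero.mp this

lemma sigmaMin_mul_le {m d : ℕ} (A : Matrix (Fin m) (Fin d) ℝ) (v : Fin d → ℝ) :
    sigmaMin A * vnorm v ≤ vnorm (A.mulVec v) := by
  rcases eq_or_ne v 0 with rfl | hv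
  · simp [vnorm, Matrix.mulVec_zero]
  · have ht : 0 < vnorm v := vnorm_pos v hv
    have hmem : vnorm (A.mulVec ((vnorm v)⁻¹ • v)) ∈
        {r : ℝ | ∃ w : Fin d → ℝ, vnorm w = 1 ∧ r = vnorm (A.mulVec w)} := by
      refine ⟨_, ?_, rfl⟩
      rw [vnorm_smul, abs_of_pos (by positivity), inv_mul_cancel₀ ht.ne']
    have hbdd : BddBelow {r : ℝ | ∃ w : Fin d → ℝ, vnorm w = 1 ∧ r = vnorm (A.mulVec w)} :=
      ⟨0, fun r ⟨w, _, hr⟩ => hr ▸ vnorm_nonneg _⟩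
    have h1 : sigmaMin A ≤ vnorm (A.mulVec ((vnorm v)⁻¹ • v)) := csInf_le hbdd hmem
    rw [Matrix.mulVec_smul, vnorm_smul, abs_of_pos (by positivity)] at h1
    calc sigmaMin A * vnorm v ≤ ((vnorm v)⁻¹ * vnorm (A.mulVec v)) * vnorm v :=
          mul_le_mul_of_nonneg_right h1 ht.le
      _ = vnorm (A.mulVec v) := by field_simp

lemma sigmaMin_pos {m d : ℕ} (hd : 0 < d) (A : Matrix (Fin m) (Fin d) ℝ)
    (hinj : Function.Injective A.mulVecLin) : 0 < sigmaMin A := by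
  set E := EuclideanSpace ℝ (Fin d)
  have hcomp : IsCompact (Metric.sphere (0 : E) 1) := isCompact_sphere 0 1
  have hne : (Metric.sphere (0 : E) 1).Nonempty := by
    refine ⟨EuclideanSpace.single ⟨0, hd⟩ 1, ?_⟩
    rw [mem_sphere_iff_norm, sub_zero, EuclideanSpace.norm_single]; exact norm_one
  have hcont : Continuous (fun v : E => vnorm (A.mulVec ((WithLp.equiv 2 (Fin d → ℝ)) v))) := by
    have h1 : Continuous (fun v : E => A.mulVecLin ((WithLp.equiv 2 (Fin d → ℝ)) v)) :=
      A.mulVecLin.continuous_of_finiteDimensional.comp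
        (PiLp.continuous_ofLp 2 (fun _ : Fin d => ℝ))
    have h2 := continuous_norm.comp
      ((PiLp.continuous_toLp 2 (fun _ : Fin m => ℝ)).comp h1)
    convert h2 using 1
    funext v
    rw [vnorm_eq_norm]
    rfl
  obtain ⟨v₀, hv₀s, hmin⟩ := hcomp.exists_isMinOn hne hcont.continuousOn
  have hv₀ : ‖v₀‖ = 1 := by simpa using hv₀s
  have hv₀ne : ((WithLp.equiv 2 (Fin d → ℝ)) v₀) ≠ 0 := by
    intro h
    have : v₀ = 0 := by
      apply (WithLp.equiv 2 (Fin d → ℝ)).injective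
      simpa using h
    rw [this] at hv₀; simp at hv₀
  have hfpos : 0 < vnorm (A.mulVec ((WithLp.equiv 2 (Fin d → ℝ)) v₀)) := by
    apply vnorm_pos
    intro h
    exact hv₀ne (hinj (by simpa [Matrix.mulVecLin] using h))
  refine lt_of_lt_of_le hfpos (le_csInf ?_ ?_)
  · refine ⟨vnorm (A.mulVec ((WithLp.equiv 2 (Fin d → ℝ)) v₀)), _, ?_, rfl⟩
    rw [vnorm_eq_norm]
    simpa using hv₀
  · rintro r ⟨w, hw1, rfl⟩
    have hws : (WithLp.equiv 2 (Fin d → ℝ)).symm w ∈ Metric.sphere (0 : E) 1 := by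
      rw [vnorm_eq_norm] at hw1
      simpa using hw1
    have := hmin hws
    simpa using this

lemma normal_eq {c d : ℕ} (A : Matrix (Fin c) (Fin d) ℝ) (b : Fin c → ℝ) (β0 : Fin d → ℝ)
    (hmin : ∀ β, vnorm (b - A.mulVec β0) ≤ vnorm (b - A.mulVec β)) :
    Aᵀ.mulVec (b - A.mulVec β0) = 0 := by
  set r := b - A.mulVec β0 with hr
  set g := Aᵀ.mulVec r with hg
  by_contra hne
  have hq : 0 < g ⬝ᵥ g :=
    lt_of_le_of_ne (dotProduct_self_nonneg' g)
      (fun h => hne (dotProduct_self_eq_zero.mp h.symm))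
  set q := g ⬝ᵥ g
  set C := (A.mulVec g) ⬝ᵥ (A.mulVec g) with hC
  have hCnn : 0 ≤ C := dotProduct_self_nonneg' _
  set t := q / (C + 1) with ht
  have htpos : 0 < t := div_pos hq (by linarith)
  have key : ∀ s : ℝ, 0 ≤ -2 * s * q + s ^ 2 * C := by
    intro s
    have h := hmin (β0 + s • g)
    have h2 : vnorm r ^ 2 ≤ vnorm (b - A.mulVec (β0 + s • g)) ^ 2 :=
      pow_le_pow_left₀ (vnorm_nonneg _) h 2
    rw [vnorm_sq, vnorm_sq] at h2
    have hexp : b - A.mulVec (β0 + s • g) = r - s • (A.mulVec g) := by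
      rw [Matrix.mulVec_add, Matrix.mulVec_smul, hr]
      abel
    rw [hexp] at h2
    have hrAg : r ⬝ᵥ (A.mulVec g) = q := by
      rw [Matrix.dotProduct_mulVec, ← Matrix.mulVec_transpose]
    have hAgr : (A.mulVec g) ⬝ᵥ r = q := by
      rw [← hrAg, dotProduct_comm]
    have hexpand : (r - s • (A.mulVec g)) ⬝ᵥ (r - s • (A.mulVec g))
        = r ⬝ᵥ r - 2 * s * q + s ^ 2 * C := by
      simp only [sub_dotProduct, dotProduct_sub, smul_dotProduct,
        dotProduct_smul, smul_eq_mul, hrAg, hAgr, ← hC]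
      ring
    rw [hexpand] at h2
    linarith
  have h3 := key t
  have heq : -2 * t * q + t ^ 2 * C = t * (t * C - 2 * q) := by ring
  rw [heq] at h3
  have h4 : t * C - 2 * q < 0 := by
    have : t * C ≤ q := by
      rw [ht, div_mul_eq_mul_div, div_le_iff₀ (by linarith)]
      nlinarith
    linarith
  nlinarith

lemma mulVec_ext {a b : ℕ} {A B : Matrix (Fin a) (Fin b) ℝ}
    (h : ∀ v, A.mulVec v = B.mulVec v) : A = B := by
  ext i j
  have := congrFun (h (Pi.single j 1)) i
  simpa [Matrix.mulVec_single] using this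

/-- Deterministic bound for sketched least squares: with `β̃` any minimizer of
`β ↦ ‖Sy − SXβ‖²` and `z = UᵀX(β_lsr − β̃)`, one has
`‖z‖ ≤ ‖UᵀSᵀS(I − UUᵀ)y‖ / σ_min²(SU)`. -/
theorem stmt_2 {n d c : ℕ} (hdn : d ≤ n)
    (X : Matrix (Fin n) (Fin d) ℝ) (hrank : X.rank = d)
    (y : Fin n → ℝ)
    (U : Matrix (Fin n) (Fin d) ℝ) (hU : Uᵀ * U = 1)
    (hcol : LinearMap.range U.mulVecLin = LinearMap.range X.mulVecLin)
    (βlsr : Fin d → ℝ) (hβ : βlsr = ((Xᵀ * X)⁻¹ * Xᵀ).mulVec y)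
    (S : Matrix (Fin c) (Fin n) ℝ) (hS : (S * U).rank = d)
    (βt : Fin d → ℝ)
    (hmin : ∀ β : Fin d → ℝ,
      vnorm (S.mulVec y - (S * X).mulVec βt) ≤ vnorm (S.mulVec y - (S * X).mulVec β))
    (z : Fin d → ℝ) (hz : z = (Uᵀ * X).mulVec (βlsr - βt)) :
    vnorm z
      ≤ vnorm ((Uᵀ * Sᵀ * S).mulVec (y - (U * Uᵀ).mulVec y)) / sigmaMin (S * U) ^ 2 := by
  -- X = U * (Uᵀ * X)
  have hXinj : Function.Injective X.mulVecLin := inj_of_rank X hrank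
  have hXU : X = U * (Uᵀ * X) := by
    symm
    apply mulVec_ext
    intro v
    have hmem : X.mulVec v ∈ LinearMap.range U.mulVecLin := by
      rw [hcol]; exact ⟨v, rfl⟩
    obtain ⟨w, hw⟩ := hmem
    simp only [Matrix.mulVecLin_apply] at hw
    have key : Uᵀ.mulVec (U.mulVec w) = w := by
      rw [Matrix.mulVec_mulVec, hU, Matrix.one_mulVec]
    calc (U * (Uᵀ * X)).mulVec v = U.mulVec ((Uᵀ * X).mulVec v) :=
          (Matrix.mulVec_mulVec v U (Uᵀ * X)).symm
      _ = U.mulVec (Uᵀ.mulVec (X.mulVec v)) := by rw [Matrix.mulVec_mulVec v Uᵀ X]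
      _ = U.mulVec (Uᵀ.mulVec (U.mulVec w)) := by rw [hw]
      _ = U.mulVec w := by rw [key]
      _ = X.mulVec v := hw
  set M := Uᵀ * X with hM
  -- M is invertible
  have hMinj : Function.Injective M.mulVec := by
    intro a b hab
    have h2 : (U * M).mulVec a = (U * M).mulVec b := by
      rw [← Matrix.mulVec_mulVec a U M, ← Matrix.mulVec_mulVec b U M, hab]
    rw [← hXU] at h2
    exact hXinj h2
  have hMunit : IsUnit M := Matrix.mulVec_injective_iff_isUnit.mp hMinj
  have hMdet : IsUnit M.det := (Matrix.isUnit_iff_isUnit_det M).mp hMunit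
  have hMTdet : IsUnit Mᵀ.det := by rwa [Matrix.det_transpose]
  -- XᵀX = MᵀM
  have hXtX : Xᵀ * X = Mᵀ * M := by
    conv_lhs => rw [hXU]
    rw [Matrix.transpose_mul, Matrix.mul_assoc, ← Matrix.mul_assoc Uᵀ U M, hU,
      Matrix.one_mul]
  -- projection identity
  have hMM : M * ((Mᵀ * M)⁻¹ * Mᵀ) = 1 := by
    rw [Matrix.mul_inv_rev, Matrix.mul_assoc M⁻¹, Matrix.nonsing_inv_mul _ hMTdet,
      Matrix.mul_one, Matrix.mul_nonsing_inv _ hMdet]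
  have hproj : X * ((Xᵀ * X)⁻¹ * Xᵀ) = U * Uᵀ := by
    have h := congrArg (fun A : Matrix (Fin d) (Fin d) ℝ => U * (A * Uᵀ)) hMM
    simp only [Matrix.one_mul] at h
    calc X * ((Xᵀ * X)⁻¹ * Xᵀ)
        = (U * M) * ((Mᵀ * M)⁻¹ * (U * M)ᵀ) := by rw [← hXU, ← hXtX]
      _ = U * (M * ((Mᵀ * M)⁻¹ * Mᵀ) * Uᵀ) := by
          simp only [Matrix.transpose_mul, Matrix.mul_assoc]
      _ = U * Uᵀ := h
  have hprojv : X.mulVec βlsr = (U * Uᵀ).mulVec y := by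
    rw [hβ, Matrix.mulVec_mulVec y X ((Xᵀ * X)⁻¹ * Xᵀ), hproj]
  -- normal equations
  have hNE := normal_eq (S * X) (S.mulVec y) βt hmin
  have e1 : S.mulVec (y - X.mulVec βt) = S.mulVec y - (S * X).mulVec βt := by
    rw [Matrix.mulVec_sub, Matrix.mulVec_mulVec βt S X]
  rw [← e1] at hNE
  have e2 : (S * X)ᵀ = Mᵀ * (Uᵀ * Sᵀ) := by
    conv_lhs => rw [hXU]
    rw [Matrix.transpose_mul, Matrix.transpose_mul, Matrix.mul_assoc]
  rw [e2] at hNE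
  have hMTinj : Function.Injective Mᵀ.mulVec :=
    Matrix.mulVec_injective_iff_isUnit.mpr ((Matrix.isUnit_iff_isUnit_det Mᵀ).mpr hMTdet)
  have h0 : Mᵀ.mulVec ((Uᵀ * Sᵀ).mulVec (S.mulVec (y - X.mulVec βt))) = 0 := by
    rw [Matrix.mulVec_mulVec _ Mᵀ (Uᵀ * Sᵀ)]
    exact hNE
  have h1 : (Uᵀ * Sᵀ).mulVec (S.mulVec (y - X.mulVec βt)) = 0 :=
    hMTinj (a₂ := 0) (by rw [Matrix.mulVec_zero]; exact h0)
  have hE : (Uᵀ * Sᵀ * S).mulVec (y - X.mulVec βt) = 0 := by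
    rw [← Matrix.mulVec_mulVec (y - X.mulVec βt) (Uᵀ * Sᵀ) S]
    exact h1
  -- compute (Uᵀ*Sᵀ*S*U) z
  have hUz : U.mulVec z = (U * Uᵀ).mulVec y - X.mulVec βt := by
    rw [hz, Matrix.mulVec_mulVec (βlsr - βt) U M, ← hXU, Matrix.mulVec_sub, hprojv]
  have hAz : (Uᵀ * Sᵀ * S * U).mulVec z
      = -((Uᵀ * Sᵀ * S).mulVec (y - (U * Uᵀ).mulVec y)) := by
    rw [← Matrix.mulVec_mulVec z (Uᵀ * Sᵀ * S) U, hUz]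
    have habel : (U * Uᵀ).mulVec y - X.mulVec βt
        = -(y - (U * Uᵀ).mulVec y) + (y - X.mulVec βt) := by abel
    rw [habel, Matrix.mulVec_add, hE, add_zero, Matrix.mulVec_neg]
  -- final chain
  rcases eq_or_lt_of_le (vnorm_nonneg z) with hz0 | hzpos
  · rw [← hz0]
    apply div_nonneg (vnorm_nonneg _) (sq_nonneg _)
  · have hzne : z ≠ 0 := fun h => by rw [h] at hzpos; simp [vnorm] at hzpos
    have hd : 0 < d := by
      rcases Nat.eq_zero_or_pos d with h0 | h
      · subst h0
        exact absurd (Subsingleton.elim z 0) hzne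
      · exact h
    have hSUinj : Function.Injective (S * U).mulVecLin := inj_of_rank _ hS
    have hσ : 0 < sigmaMin (S * U) := sigmaMin_pos hd _ hSUinj
    set σ := sigmaMin (S * U)
    set num := vnorm ((Uᵀ * Sᵀ * S).mulVec (y - (U * Uᵀ).mulVec y)) with hnum
    have h1 : σ * vnorm z ≤ vnorm ((S * U).mulVec z) := sigmaMin_mul_le _ _
    have h2 : vnorm ((S * U).mulVec z) ^ 2 = ((Uᵀ * Sᵀ * S * U).mulVec z) ⬝ᵥ z := by
      rw [vnorm_sq, Matrix.dotProduct_mulVec, ← Matrix.mulVec_transpose,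
        Matrix.mulVec_mulVec z (S * U)ᵀ (S * U), Matrix.transpose_mul]
      congr 2
      simp only [Matrix.mul_assoc]
    have h3 : ((Uᵀ * Sᵀ * S * U).mulVec z) ⬝ᵥ z ≤ num * vnorm z := by
      calc ((Uᵀ * Sᵀ * S * U).mulVec z) ⬝ᵥ z
          ≤ vnorm ((Uᵀ * Sᵀ * S * U).mulVec z) * vnorm z := dot_le_vnorm_mul _ _
        _ = num * vnorm z := by rw [hAz, vnorm_neg]
    have h4 : (σ * vnorm z) ^ 2 ≤ num * vnorm z := by
      calc (σ * vnorm z) ^ 2 ≤ vnorm ((S * U).mulVec z) ^ 2 :=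
            pow_le_pow_left₀ (by positivity) h1 2
        _ = _ := h2
        _ ≤ num * vnorm z := h3
    rw [le_div_iff₀ (by positivity)]
    nlinarith [hzpos, hσ, vnorm_nonneg ((S * U).mulVec z)]
end

section
/- Let U ∈ ℝ^{n×d} have orthonormal columns, let Y ∈ ℝ^{n×p}, and fix c ≥ 1. For i = 1, …, n let l_i = ‖u^(i)‖₂² (the squared norm of the i-th row of U) and p_i = min{1, c·l_i/d}. Let δ₁, …, δ_n be independent {0,1}-valued random variables with P(δ_i = 1) = p_i, and let D be the random n×n diagonal matrix with D_ii = δ_i/p_i when p_i > 0 and D_ii = 0 when p_i = 0. Then E‖UᵀY − UᵀDY‖_F ≤ (1/√c)·‖U‖_F·‖Y‖_F = √(d/c)·‖Y‖_F. -/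
open Matrix BigOperators
open scoped Classical

/-- Frobenius norm of a real matrix. -/
noncomputable def fnorm {a b : ℕ} (M : Matrix (Fin a) (Fin b) ℝ) : ℝ :=
  Real.sqrt (∑ i, ∑ j, M i j ^ 2)

/-- Probability of the outcome `e` when `e i = true` independently with probability `p i`. -/
noncomputable def bernWeight {n : ℕ} (p : Fin n → ℝ) (e : Fin n → Bool) : ℝ :=
  ∏ i, if e i then p i else 1 - p i

lemma sum_prod_bool {n : ℕ} (f : Fin n → Bool → ℝ) :
    ∑ e : Fin n → Bool, ∏ i, f i (e i) = ∏ i, (f i true + f i false) := by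
  have h := Finset.prod_univ_sum (fun _ : Fin n => (Finset.univ : Finset Bool)) f
  simp only [Fintype.piFinset_univ] at h
  rw [← h]
  exact Finset.prod_congr rfl fun i _ => by simp [Fintype.sum_bool]

lemma bern_expect {n : ℕ} (p : Fin n → ℝ) (g : Fin n → Bool → ℝ) :
    ∑ e : Fin n → Bool, bernWeight p e * ∏ i, g i (e i)
      = ∏ i, (p i * g i true + (1 - p i) * g i false) := by
  have h1 : ∀ e : Fin n → Bool, bernWeight p e * ∏ i, g i (e i)
      = ∏ i, (fun i b => (if b then p i else 1 - p i) * g i b) i (e i) := by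
    intro e
    rw [bernWeight, ← Finset.prod_mul_distrib]
  simp_rw [h1]
  rw [sum_prod_bool (fun i b => (if b then p i else 1 - p i) * g i b)]
  simp

/-- Leverage-score sampling, expected error of approximate matrix multiplication:
with `l_i = ‖u^(i)‖²`, `p_i = min{1, c l_i / d}`, and `D` the random diagonal matrix with
`D_ii = δ_i / p_i` (and `0` if `p_i = 0`) for independent Bernoulli(`p_i`) variables `δ_i`,
`E ‖UᵀY − UᵀDY‖_F ≤ (1/√c)·‖U‖_F·‖Y‖_F`. -/
theorem stmt_5 {n d p : ℕ}
    (U : Matrix (Fin n) (Fin d) ℝ) (hU : Uᵀ * U = 1)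
    (Y : Matrix (Fin n) (Fin p) ℝ)
    (c : ℕ) (hc : 1 ≤ c)
    (l : Fin n → ℝ) (hl : l = fun i => ∑ j, U i j ^ 2)
    (prob : Fin n → ℝ) (hprob : prob = fun i => min 1 ((c : ℝ) * l i / d))
    (D : (Fin n → Bool) → Matrix (Fin n) (Fin n) ℝ)
    (hD : D = fun e => Matrix.diagonal fun i => if e i then 1 / prob i else 0) :
    (∑ e : Fin n → Bool, bernWeight prob e * fnorm (Uᵀ * Y - Uᵀ * D e * Y))
      ≤ (1 / Real.sqrt c) * fnorm U * fnorm Y := by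
  have hc0 : (0:ℝ) < c := by exact_mod_cast hc
  have hl0 : ∀ i, 0 ≤ l i := by intro i; rw [hl]; positivity
  have hp0 : ∀ i, 0 ≤ prob i := by
    intro i; rw [hprob]
    exact le_min zero_le_one (div_nonneg (mul_nonneg hc0.le (hl0 i)) (Nat.cast_nonneg d))
  have hp1 : ∀ i, prob i ≤ 1 := by intro i; rw [hprob]; exact min_le_left _ _
  have hw0 : ∀ e, 0 ≤ bernWeight prob e := by
    intro e; unfold bernWeight
    apply Finset.prod_nonneg
    intro i _
    split
    · exact hp0 i
    · linarith [hp1 i]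
  -- total mass one
  have hwsum : ∑ e : Fin n → Bool, bernWeight prob e = 1 := by
    have h := bern_expect prob (fun _ _ => (1:ℝ))
    simpa using h
  -- entries
  set dv : Fin n → Bool → ℝ := fun i b => if b then 1 / prob i else 0 with hdv
  have hentry : ∀ (e : Fin n → Bool) (j : Fin d) (k : Fin p),
      (Uᵀ * Y - Uᵀ * D e * Y) j k = ∑ i, U i j * Y i k * (1 - dv i (e i)) := by
    intro e j k
    rw [hD]
    have h1 : (Uᵀ * Matrix.diagonal (fun i => if e i then 1 / prob i else 0) * Y) j k
        = ∑ i, U i j * (if e i then 1 / prob i else 0) * Y i k := by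
      rw [Matrix.mul_apply]
      simp_rw [Matrix.mul_diagonal, Matrix.transpose_apply]
    rw [Matrix.sub_apply, h1, Matrix.mul_apply, ← Finset.sum_sub_distrib]
    apply Finset.sum_congr rfl
    intro i _
    simp only [hdv, Matrix.transpose_apply]
    ring
  -- positivity of prob when row nonzero
  have hpos : ∀ (i : Fin n) (j : Fin d), U i j ≠ 0 → 0 < prob i := by
    intro i j h
    have hli : 0 < l i := by
      rw [hl]
      have : U i j ^ 2 ≤ ∑ j', U i j' ^ 2 :=
        Finset.single_le_sum (f := fun j' => U i j' ^ 2) (fun j' _ => sq_nonneg _)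
          (Finset.mem_univ j)
      have h2 : 0 < U i j ^ 2 := by positivity
      linarith
    have hd : (0:ℝ) < d := by exact_mod_cast j.pos
    rw [hprob]
    exact lt_min one_pos (by positivity)
  -- the expectation kernel
  set E : Fin n → Fin n → ℝ := fun i i' =>
    ∑ e : Fin n → Bool, bernWeight prob e * ((1 - dv i (e i)) * (1 - dv i' (e i'))) with hE
  have hEfact : ∀ i i', E i i' =
      ∏ m, (prob m * ((if m = i then 1 - dv i true else 1) * (if m = i' then 1 - dv i' true else 1))
        + (1 - prob m) * ((if m = i then 1 - dv i false else 1) * (if m = i' then 1 - dv i' false else 1))) := by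
    intro i i'
    have h2 : ∀ e : Fin n → Bool, (1 - dv i (e i)) * (1 - dv i' (e i'))
        = ∏ m, ((if m = i then 1 - dv i (e m) else 1) * (if m = i' then 1 - dv i' (e m) else 1)) := by
      intro e
      rw [Finset.prod_mul_distrib, Finset.prod_ite_eq' Finset.univ i (fun m => 1 - dv i (e m)),
        Finset.prod_ite_eq' Finset.univ i' (fun m => 1 - dv i' (e m))]
      simp
    simp_rw [hE, h2]
    exact bern_expect prob
      (fun m b => (if m = i then 1 - dv i b else 1) * (if m = i' then 1 - dv i' b else 1))
  have hEoff : ∀ i i', i ≠ i' → 0 < prob i → E i i' = 0 := by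
    intro i i' hne hpi
    rw [hEfact]
    apply Finset.prod_eq_zero (Finset.mem_univ i)
    simp only [if_pos rfl, if_neg hne, hdv, if_true, if_false, Bool.false_eq_true]
    have : prob i ≠ 0 := ne_of_gt hpi
    field_simp
    ring
  have hEdiag : ∀ i, 0 < prob i → E i i = 1 / prob i - 1 := by
    intro i hpi
    rw [hEfact]
    rw [Finset.prod_eq_single i]
    · simp only [if_pos rfl, hdv, if_true, if_false, Bool.false_eq_true]
      have : prob i ≠ 0 := ne_of_gt hpi
      field_simp
      ring
    · intro m _ hm
      simp only [if_neg hm]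
      ring
    · intro h; exact absurd (Finset.mem_univ i) h
  -- second moment per entry
  have hsq : ∀ (j : Fin d) (k : Fin p),
      ∑ e : Fin n → Bool, bernWeight prob e * ((Uᵀ * Y - Uᵀ * D e * Y) j k) ^ 2
        = ∑ i, (U i j * Y i k) ^ 2 * (1 / prob i - 1) := by
    intro j k
    have step1 : ∀ e : Fin n → Bool,
        bernWeight prob e * ((Uᵀ * Y - Uᵀ * D e * Y) j k) ^ 2
        = ∑ i, ∑ i', (U i j * Y i k) * (U i' j * Y i' k) *
            (bernWeight prob e * ((1 - dv i (e i)) * (1 - dv i' (e i')))) := by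
      intro e
      rw [hentry, pow_two, Finset.sum_mul_sum, Finset.mul_sum]
      apply Finset.sum_congr rfl
      intro i _
      rw [Finset.mul_sum]
      apply Finset.sum_congr rfl
      intro i' _
      ring
    simp_rw [step1]
    rw [Finset.sum_comm]
    apply Finset.sum_congr rfl
    intro i _
    rw [Finset.sum_comm]
    have step2 : ∑ i', ∑ e : Fin n → Bool, (U i j * Y i k) * (U i' j * Y i' k) *
        (bernWeight prob e * ((1 - dv i (e i)) * (1 - dv i' (e i'))))
        = ∑ i', (U i j * Y i k) * (U i' j * Y i' k) * E i i' := by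
      apply Finset.sum_congr rfl
      intro i' _
      rw [hE, ← Finset.mul_sum]
    rw [step2]
    rw [Finset.sum_eq_single i]
    · by_cases h1 : U i j = 0
      · simp [h1]
      · rw [hEdiag i (hpos i j h1)]; ring
    · intro i' _ hne
      by_cases h1 : U i j = 0
      · simp [h1]
      · by_cases h2 : U i' j = 0
        · simp [h2]
        · rw [hEoff i i' (Ne.symm hne) (hpos i j h1)]; ring
    · intro h; exact absurd (Finset.mem_univ i) h
  -- key per-row bound
  have hkey : ∀ i, (1 / prob i - 1) * l i ≤ (d:ℝ) / c := by
    intro i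
    have hdc : (0:ℝ) ≤ (d:ℝ) / c := by positivity
    rcases le_or_gt 1 ((c:ℝ) * l i / d) with h | h
    · have : prob i = 1 := by rw [hprob]; exact min_eq_left h
      rw [this]; simp; exact hdc
    · have hpe : prob i = (c:ℝ) * l i / d := by rw [hprob]; exact min_eq_right h.le
      rcases eq_or_lt_of_le (hp0 i) with h0 | h0
      · rw [← h0]
        simp only [div_zero, zero_sub]
        nlinarith [hl0 i]
      · have hx : (0:ℝ) < (c:ℝ) * l i / d := hpe ▸ h0
        have hli : 0 < l i := by
          rcases eq_or_lt_of_le (hl0 i) with h' | h'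
          · exfalso; rw [← h'] at hx; simp at hx
          · exact h'
        have hd0 : (d:ℝ) ≠ 0 := by
          intro hd'
          rw [hd', div_zero] at hx
          exact lt_irrefl 0 hx
        have step : (1 / prob i - 1) * l i ≤ (1 / prob i) * l i :=
          mul_le_mul_of_nonneg_right (by linarith [one_div_nonneg.mpr (hp0 i)]) (hl0 i)
        have step2 : (1 / prob i) * l i = (d:ℝ) / c := by
          rw [hpe]
          field_simp
        linarith
  -- sum of squared row norms of U equals d
  have hUF : ∑ i, ∑ j, U i j ^ 2 = (d:ℝ) := by
    rw [Finset.sum_comm]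
    have h1 : ∀ j : Fin d, ∑ i, U i j ^ 2 = (Uᵀ * U) j j := by
      intro j
      simp [Matrix.mul_apply, Matrix.transpose_apply, pow_two]
    simp_rw [h1, hU]
    simp [Matrix.one_apply]
  -- second moment bound
  set S : (Fin n → Bool) → ℝ := fun e => ∑ j, ∑ k, ((Uᵀ * Y - Uᵀ * D e * Y) j k) ^ 2 with hS
  have hS0 : ∀ e, 0 ≤ S e := by intro e; apply Finset.sum_nonneg; intro j _; positivity
  have hA : ∑ e : Fin n → Bool, bernWeight prob e * S e
      ≤ ((d:ℝ) / c) * ∑ i, ∑ k, Y i k ^ 2 := by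
    have swap : ∑ e : Fin n → Bool, bernWeight prob e * S e
        = ∑ j, ∑ k, ∑ e : Fin n → Bool, bernWeight prob e * ((Uᵀ * Y - Uᵀ * D e * Y) j k) ^ 2 := by
      simp_rw [hS, Finset.mul_sum]
      rw [Finset.sum_comm]
      apply Finset.sum_congr rfl
      intro j _
      rw [Finset.sum_comm]
    rw [swap]
    simp_rw [hsq]
    have rearr : ∑ j, ∑ k, ∑ i, (U i j * Y i k) ^ 2 * (1 / prob i - 1)
        = ∑ i, (1 / prob i - 1) * l i * (∑ k, Y i k ^ 2) := by
      have c0 : ∑ j, ∑ k, ∑ i, (U i j * Y i k) ^ 2 * (1 / prob i - 1)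
          = ∑ j, ∑ i, ∑ k, (U i j * Y i k) ^ 2 * (1 / prob i - 1) :=
        Finset.sum_congr rfl fun j _ => Finset.sum_comm
      rw [c0, Finset.sum_comm]
      apply Finset.sum_congr rfl
      intro i _
      have c2 : ∀ j : Fin d, ∑ k, (U i j * Y i k) ^ 2 * (1 / prob i - 1)
          = U i j ^ 2 * (1 / prob i - 1) * ∑ k, Y i k ^ 2 := by
        intro j
        rw [Finset.mul_sum]
        apply Finset.sum_congr rfl
        intro k _
        ring
      simp_rw [c2]
      rw [← Finset.sum_mul, ← Finset.sum_mul]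
      simp only [hl]
      ring
    rw [rearr, Finset.mul_sum]
    apply Finset.sum_le_sum
    intro i _
    have hB : 0 ≤ ∑ k, Y i k ^ 2 := Finset.sum_nonneg fun k _ => sq_nonneg _
    exact mul_le_mul_of_nonneg_right (hkey i) hB
  -- Cauchy-Schwarz step
  have hfn : ∀ e, fnorm (Uᵀ * Y - Uᵀ * D e * Y) = Real.sqrt (S e) := fun e => rfl
  have hCS : (∑ e : Fin n → Bool, bernWeight prob e * Real.sqrt (S e)) ^ 2
      ≤ ∑ e : Fin n → Bool, bernWeight prob e * S e := by
    have h := Finset.sum_mul_sq_le_sq_mul_sq Finset.univ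
      (fun e => Real.sqrt (bernWeight prob e))
      (fun e => Real.sqrt (bernWeight prob e) * Real.sqrt (S e))
    have e1 : ∀ e : Fin n → Bool,
        Real.sqrt (bernWeight prob e) * (Real.sqrt (bernWeight prob e) * Real.sqrt (S e))
          = bernWeight prob e * Real.sqrt (S e) := by
      intro e
      rw [← mul_assoc, Real.mul_self_sqrt (hw0 e)]
    have e2 : ∀ e : Fin n → Bool, Real.sqrt (bernWeight prob e) ^ 2 = bernWeight prob e :=
      fun e => Real.sq_sqrt (hw0 e)
    have e3 : ∀ e : Fin n → Bool,
        (Real.sqrt (bernWeight prob e) * Real.sqrt (S e)) ^ 2 = bernWeight prob e * S e := by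
      intro e
      rw [mul_pow, Real.sq_sqrt (hw0 e), Real.sq_sqrt (hS0 e)]
    simp_rw [e1, e2, e3] at h
    rw [hwsum, one_mul] at h
    exact h
  have hL0 : 0 ≤ ∑ e : Fin n → Bool, bernWeight prob e * Real.sqrt (S e) :=
    Finset.sum_nonneg fun e _ => mul_nonneg (hw0 e) (Real.sqrt_nonneg _)
  have step3 : (∑ e : Fin n → Bool, bernWeight prob e * Real.sqrt (S e))
      ≤ Real.sqrt (((d:ℝ) / c) * ∑ i, ∑ k, Y i k ^ 2) := by
    rw [show (∑ e : Fin n → Bool, bernWeight prob e * Real.sqrt (S e))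
        = Real.sqrt ((∑ e : Fin n → Bool, bernWeight prob e * Real.sqrt (S e)) ^ 2) from
      (Real.sqrt_sq hL0).symm]
    exact Real.sqrt_le_sqrt (le_trans hCS hA)
  simp_rw [hfn]
  refine le_trans step3 ?_
  -- identify the right-hand side
  have hB0 : 0 ≤ ∑ i, ∑ k, Y i k ^ 2 :=
    Finset.sum_nonneg fun i _ => Finset.sum_nonneg fun k _ => sq_nonneg _
  rw [Real.sqrt_mul (by positivity) (∑ i, ∑ k, Y i k ^ 2)]
  unfold fnorm
  rw [hUF]
  rw [Real.sqrt_div (Nat.cast_nonneg d)]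
  apply le_of_eq
  ring
end
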